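/- Let (L[[t]], ν_t, d_t) and (L[[t]], ν'_t, d'_t) be two equivalent 1-parameter formal deformations of a modified λ-differential Lie triple system (L, ν, d), connected by a formal isomorphism φ_t = id + Σ_{i≥1} φᵢtⁱ satisfying φ_t∘ν'_t = ν_t∘(φ_t × φ_t × φ_t) and φ_t∘d'_t = d_t∘φ_t. Then the infinitesimals differ by a coboundary: for all a,b,c ∈ L, ν'₁(a,b,c) − ν₁(a,b,c) = [φ₁(a),b,c] + [a,φ₁(b),c] + [a,b,φ₁(c)] − φ₁([a,b,c]) and d'₁(a) − d₁(a) = d(φ₁(a)) − φ₁(d(a)). Hence [(ν'₁,d'₁)] = [(ν₁,d₁)] in the third cohomology group. -/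

import Mathlib

open Finset

/-- If `φ_t = id + Σ_{i≥1} φᵢtⁱ` is a formal isomorphism from the
deformation `(ν'_t, d'_t)` to the deformation `(ν_t, d_t)` of a modified
`λ`-differential Lie triple system `(L, ν₀, d₀)` (expressed by the coefficient
equations of `φ_t∘ν'_t = ν_t∘(φ_t×φ_t×φ_t)` and `φ_t∘d'_t = d_t∘φ_t`), then the
infinitesimals differ by the coboundary of `φ₁`. -/
theorem equivalent_deformations_infinitesimals_cohomologous
    {K L : Type*} [Field K] [CharZero K] [AddCommGroup L] [Module K L]
    (lam : K)
    (ν ν' : ℕ → (L →ₗ[K] L →ₗ[K] L →ₗ[K] L)) (dd dd' : ℕ → (L →ₗ[K] L))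
    (φ : ℕ → (L →ₗ[K] L))
    (hν0 : ν' 0 = ν 0) (hd0 : dd' 0 = dd 0) (hφ0 : φ 0 = LinearMap.id)
    (hskew : ∀ x y z : L, ν 0 x y z + ν 0 y x z = 0)
    (hcyc : ∀ x y z : L, ν 0 x y z + ν 0 z x y + ν 0 y z x = 0)
    (hfund : ∀ a b x y z : L,
      ν 0 a b (ν 0 x y z)
        = ν 0 (ν 0 a b x) y z + ν 0 x (ν 0 a b y) z + ν 0 x y (ν 0 a b z))
    (hmod : ∀ a b c : L,
      dd 0 (ν 0 a b c)
        = ν 0 (dd 0 a) b c + ν 0 a (dd 0 b) c + ν 0 a b (dd 0 c)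
          + lam • ν 0 a b c)
    (hiso1 : ∀ (n : ℕ) (a b c : L),
      ∑ p ∈ Finset.HasAntidiagonal.antidiagonal n, φ p.1 (ν' p.2 a b c)
        = ∑ p ∈ Finset.HasAntidiagonal.antidiagonal n, ∑ q ∈ Finset.HasAntidiagonal.antidiagonal p.2,
            ∑ r ∈ Finset.HasAntidiagonal.antidiagonal q.2,
              ν p.1 (φ q.1 a) (φ r.1 b) (φ r.2 c))
    (hiso2 : ∀ (n : ℕ) (a : L),
      ∑ p ∈ Finset.HasAntidiagonal.antidiagonal n, φ p.1 (dd' p.2 a)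
        = ∑ p ∈ Finset.HasAntidiagonal.antidiagonal n, dd p.1 (φ p.2 a)) :
    (∀ a b c : L,
      ν' 1 a b c - ν 1 a b c
        = ν 0 (φ 1 a) b c + ν 0 a (φ 1 b) c + ν 0 a b (φ 1 c)
          - φ 1 (ν 0 a b c))
    ∧ (∀ a : L, dd' 1 a - dd 1 a = dd 0 (φ 1 a) - φ 1 (dd 0 a)) := by
  constructor
  · intro a b c
    have h := hiso1 1 a b c
    simp [Finset.Nat.sum_antidiagonal_succ, hν0, hd0, hφ0] at h
    linear_combination (norm := abel) h
  · intro a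
    have h := hiso2 1 a
    simp [Finset.Nat.sum_antidiagonal_succ, hν0, hd0, hφ0] at h
    linear_combination (norm := abel) h
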